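/- arXiv:2107.07456 — 3 statements merged into one kernel-verified Lean document; each statement's English description precedes it below -/
import Mathlib

section
/- Let x : I → ℝ^N be a solution of x'(t) = P(x(t)) on I = [a, b], and suppose there exists t₀ ∈ I with t₀ < b such that x(t) = x(t₀) for all t ∈ [t₀, b] (an equilibrium is reached). If φ : ℝ^N → ℂ satisfies d/dt [φ(x(t))] = λ·φ(x(t)) on I with λ ≠ 0, then φ(x(t)) = 0 for all t ∈ I. -/
theorem equilibrium_forces_trivial_eigenfunction
    {N : ℕ} (a b t₀ : ℝ)
    (P : EuclideanSpace ℝ (Fin N) → EuclideanSpace ℝ (Fin N))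
    (x : ℝ → EuclideanSpace ℝ (Fin N))
    (φ : EuclideanSpace ℝ (Fin N) → ℂ) (lam : ℂ)
    (hx : ∀ t ∈ Set.Icc a b, HasDerivAt x (P (x t)) t)
    (ht₀ : t₀ ∈ Set.Icc a b) (ht₀b : t₀ < b)
    (heq : ∀ t ∈ Set.Icc t₀ b, x t = x t₀)
    (hφ : ∀ t ∈ Set.Icc a b, HasDerivAt (fun s => φ (x s)) (lam * φ (x t)) t)
    (hlam : lam ≠ 0) :
    ∀ t ∈ Set.Icc a b, φ (x t) = 0 := by
  -- Step 1: φ (x t₀) = 0.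
  -- Pick an interior point s of (t₀, b): the function is locally constant there,
  -- so its derivative is 0, hence lam * φ(x s) = 0, hence φ(x t₀) = 0.
  have ha_b : a ≤ b := le_trans ht₀.1 ht₀.2
  set s : ℝ := (t₀ + b) / 2 with hs
  have hst : t₀ < s := by simp [hs]; linarith
  have hsb : s < b := by simp [hs]; linarith
  have hsI : s ∈ Set.Icc a b := ⟨le_trans ht₀.1 hst.le, hsb.le⟩
  have hconst : ∀ t ∈ Set.Ioo t₀ b, (fun u => φ (x u)) t = φ (x t₀) := by
    intro t ht
    simp [heq t ⟨ht.1.le, ht.2.le⟩]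
  have hzero : HasDerivAt (fun u => φ (x u)) 0 s := by
    have : (fun u => φ (x u)) =ᶠ[nhds s] fun _ => φ (x t₀) := by
      filter_upwards [Ioo_mem_nhds hst hsb] with t ht using hconst t ht
    exact (hasDerivAt_const s (φ (x t₀))).congr_of_eventuallyEq this
  have h0 : φ (x t₀) = 0 := by
    have := (hφ s hsI).unique hzero
    have hxs : x s = x t₀ := heq s ⟨hst.le, hsb.le⟩
    rw [hxs] at this
    exact (mul_eq_zero.mp this).resolve_left hlam
  -- Step 2: h(t) = exp(-lam t) * φ(x t) has zero derivative on [a,b].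
  set h : ℝ → ℂ := fun t => Complex.exp (-lam * t) * φ (x t) with hh
  have hderiv : ∀ t ∈ Set.Icc a b, HasDerivAt h 0 t := by
    intro t ht
    have h1 : HasDerivAt (fun u : ℝ => Complex.exp (-lam * u))
        (-lam * Complex.exp (-lam * t)) t := by
      have := ((Complex.hasDerivAt_exp (-lam * t)).comp t
        ((hasDerivAt_id t).ofReal_comp.const_mul (-lam)))
      simpa [mul_comm, Function.comp_def] using this
    have := h1.mul (hφ t ht)
    convert this using 1
    · rfl
    · rfl
    · ring
  -- h is constant on [a,b] (convexity).
  have hmono : ∀ t ∈ Set.Icc a b, h t = h t₀ := by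
    intro t ht
    have key : ∀ u ∈ Set.Icc a b, ∀ v ∈ Set.Icc a b, h u = h v := by
      intro u hu v hv
      have : ∀ w ∈ Set.Icc a b, HasDerivWithinAt h 0 (Set.Icc a b) w :=
        fun w hw => (hderiv w hw).hasDerivWithinAt
      have := (convex_Icc a b).is_const_of_fderivWithin_eq_zero
        (𝕜 := ℝ) (f := h) ?_ ?_ hu hv
      · exact this
      · exact fun w hw => ((hderiv w hw).differentiableAt.differentiableWithinAt)
      · intro w hw
        have hd := (hderiv w hw).hasFDerivAt.hasFDerivWithinAt (s := Set.Icc a b)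
        rw [hd.fderivWithin ((uniqueDiffOn_Icc (lt_of_le_of_lt ht₀.1 ht₀b)) w hw)]
        ext v
        simp
    exact key t ht t₀ ht₀
  intro t ht
  have := hmono t ht
  have ht0 : h t₀ = 0 := by simp [hh, h0]
  rw [ht0] at this
  have : Complex.exp (-lam * t) * φ (x t) = 0 := this
  exact (mul_eq_zero.mp this).resolve_left (Complex.exp_ne_zero _)
end

section
/- Let Φ : ℝ^N → ℝ^N be differentiable with invertible Jacobian J(Φ)(x(t)) along a solution x of x'(t) = P(x(t)), and suppose each component of Φ ∘ x satisfies (Φᵢ ∘ x)'(t) = λᵢ·Φᵢ(x(t)). Then P(x(t)) = (J(Φ)(x(t)))⁻¹ · Λ · Φ(x(t)) for all t ∈ I, where Λ = diag(λ₁,...,λ_N). -/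
theorem dynamic_reconstruction_from_eigenfunctions
    {N : ℕ} (I : Set ℝ)
    (P : (Fin N → ℝ) → (Fin N → ℝ))
    (x : ℝ → (Fin N → ℝ))
    (Φ : (Fin N → ℝ) → (Fin N → ℝ))
    (J : (Fin N → ℝ) → Matrix (Fin N) (Fin N) ℝ)
    (lam : Fin N → ℝ)
    (hx : ∀ t ∈ I, HasDerivAt x (P (x t)) t)
    (hΦ : ∀ t ∈ I, HasFDerivAt Φ (LinearMap.toContinuousLinearMap ((J (x t)).mulVecLin)) (x t))
    (hinv : ∀ t ∈ I, IsUnit ((J (x t)).det))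
    (heig : ∀ i : Fin N, ∀ t ∈ I,
        HasDerivAt (fun s => Φ (x s) i) (lam i * Φ (x t) i) t) :
    ∀ t ∈ I, P (x t) = (J (x t))⁻¹.mulVec ((Matrix.diagonal lam).mulVec (Φ (x t))) := by
  intro t ht
  have hcomp : HasDerivAt (fun s => Φ (x s)) ((J (x t)).mulVec (P (x t))) t := by
    have := (hΦ t ht).comp_hasDerivAt t (hx t ht)
    simpa [Function.comp_def] using this
  have hcomp2 : HasDerivAt (fun s => Φ (x s))
      (fun i => lam i * Φ (x t) i) t := by
    rw [hasDerivAt_pi]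
    intro i
    exact heig i t ht
  have heq : (J (x t)).mulVec (P (x t)) = fun i => lam i * Φ (x t) i :=
    hcomp.unique hcomp2
  have hΛ : (Matrix.diagonal lam).mulVec (Φ (x t)) = fun i => lam i * Φ (x t) i := by
    funext i
    simp [Matrix.mulVec_diagonal]
  rw [hΛ, ← heq, Matrix.mulVec_mulVec, Matrix.nonsing_inv_mul _ (hinv t ht),
    Matrix.one_mulVec]
end

section
/- Let u : [0,L] × I → ℝ be a solution of u_t = 𝒫(u) on I = [a,b], and suppose there exists T ∈ I with T < b such that u(x,t) = u(x,T) for all x and all t ∈ [T, b]. If Φ : H → ℝ satisfies d/dt Φ(u(·,t)) = λ·Φ(u(·,t)) on I with λ ≠ 0, then Φ(u(·,t)) = 0 for all t ∈ I. -/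
theorem equilibrium_forces_trivial_eigenfunctional
    {H : Type*} [NormedAddCommGroup H] [InnerProductSpace ℝ H] [CompleteSpace H]
    (a b T : ℝ) (Pop : H → H) (u : ℝ → H)
    (Φ : H → ℝ) (lam : ℝ)
    (hu : ∀ t ∈ Set.Icc a b, HasDerivAt u (Pop (u t)) t)
    (hT : T ∈ Set.Icc a b) (hTb : T < b)
    (hconst : ∀ t ∈ Set.Icc T b, u t = u T)
    (hΦ : ∀ t ∈ Set.Icc a b, HasDerivAt (fun s => Φ (u s)) (lam * Φ (u t)) t)
    (hlam : lam ≠ 0) :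
    ∀ t ∈ Set.Icc a b, Φ (u t) = 0 := by
  obtain ⟨haT, _⟩ := hT
  have hab : a ≤ b := le_of_lt (lt_of_le_of_lt haT hTb)
  set t0 : ℝ := (T + b) / 2 with ht0
  have hTt0 : T < t0 := by simp [ht0]; linarith
  have ht0b : t0 < b := by simp [ht0]; linarith
  have ht0ab : t0 ∈ Set.Icc a b := ⟨le_of_lt (lt_of_le_of_lt haT hTt0), le_of_lt ht0b⟩
  -- g is eventually constant near t0
  have hev : (fun s => Φ (u s)) =ᶠ[nhds t0] (fun _ => Φ (u T)) := by
    have : Set.Ioo T b ∈ nhds t0 := Ioo_mem_nhds hTt0 ht0b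
    filter_upwards [this] with s hs
    rw [hconst s ⟨le_of_lt hs.1, le_of_lt hs.2⟩]
  have hd0 : HasDerivAt (fun s => Φ (u s)) 0 t0 :=
    (hasDerivAt_const t0 (Φ (u T))).congr_of_eventuallyEq hev
  have hgt0 : Φ (u t0) = 0 := by
    have := (hΦ t0 ht0ab).unique hd0
    have := mul_eq_zero.mp this
    tauto
  -- h := Φ(u t) * exp(-lam t) has derivative 0 on Icc
  set h : ℝ → ℝ := fun t => Φ (u t) * Real.exp (-lam * t) with hh
  have hderiv : ∀ t ∈ Set.Icc a b, HasDerivAt h 0 t := by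
    intro t ht
    have h1 := (hΦ t ht).mul ((Real.hasDerivAt_exp (-lam * t)).comp t
      ((hasDerivAt_id t).const_mul (-lam)))
    refine h1.congr_deriv ?_
    simp [Function.comp]
    ring
  have hcont : ContinuousOn h (Set.Icc a b) := fun t ht =>
    (hderiv t ht).continuousAt.continuousWithinAt
  have hconst' : ∀ t ∈ Set.Icc a b, h t = h a := by
    intro t ht
    exact constant_of_has_deriv_right_zero hcont
      (fun x hx => (hderiv x ⟨hx.1, le_of_lt hx.2⟩).hasDerivWithinAt) t ht
  have ha0 : h a = 0 := by
    have := hconst' t0 ht0ab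
    rw [hh] at this
    simp only [hgt0, zero_mul] at this
    exact this.symm
  intro t ht
  have := hconst' t ht
  rw [ha0, hh] at this
  have hexp : Real.exp (-lam * t) ≠ 0 := Real.exp_ne_zero _
  exact (mul_eq_zero.mp this).resolve_right hexp
end
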